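/- If X is a Hausdorff space, then d(X) ≤ πχ(X)^(c(X)·nq(X)). -/

import Mathlib

open Cardinal Set TopologicalSpace

universe u

/-- The density of a space: the least cardinality of a dense subset. -/
noncomputable def dens (X : Type u) [TopologicalSpace X] : Cardinal.{u} :=
  sInf {c : Cardinal.{u} | ∃ D : Set X, Dense D ∧ #D = c}

/-- A local π-base at a point: a family of nonempty open sets such that every
open set containing the point contains a member of the family. -/
def IsLocalPiBase (X : Type u) [TopologicalSpace X] (x : X) (𝒱 : Set (Set X)) : Prop :=
  (∀ V ∈ 𝒱, IsOpen V ∧ V.Nonempty) ∧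
    ∀ U : Set X, IsOpen U → x ∈ U → ∃ V ∈ 𝒱, V ⊆ U

/-- The π-character at a point: the least infinite cardinality of a local π-base. -/
noncomputable def piCharPoint (X : Type u) [TopologicalSpace X] (x : X) : Cardinal.{u} :=
  sInf {κ : Cardinal.{u} | ℵ₀ ≤ κ ∧ ∃ 𝒱 : Set (Set X), IsLocalPiBase X x 𝒱 ∧ #𝒱 ≤ κ}

/-- The π-character of a space. -/
noncomputable def piChar (X : Type u) [TopologicalSpace X] : Cardinal.{u} :=
  ⨆ x : X, piCharPoint X x

/-- A π-base for a space. -/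
def IsPiBase (X : Type u) [TopologicalSpace X] (𝒱 : Set (Set X)) : Prop :=
  (∀ V ∈ 𝒱, IsOpen V ∧ V.Nonempty) ∧
    ∀ U : Set X, IsOpen U → U.Nonempty → ∃ V ∈ 𝒱, V ⊆ U

/-- The π-weight of a space: the least infinite cardinality of a π-base. -/
noncomputable def piWeight (X : Type u) [TopologicalSpace X] : Cardinal.{u} :=
  sInf {κ : Cardinal.{u} | ℵ₀ ≤ κ ∧ ∃ 𝒱 : Set (Set X), IsPiBase X 𝒱 ∧ #𝒱 ≤ κ}

/-- The cellularity of a space: the least infinite cardinal bounding the size of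
every pairwise disjoint family of nonempty open sets. -/
noncomputable def cellularity (X : Type u) [TopologicalSpace X] : Cardinal.{u} :=
  sInf {κ : Cardinal.{u} | ℵ₀ ≤ κ ∧ ∀ 𝒞 : Set (Set X),
    (∀ U ∈ 𝒞, IsOpen U ∧ U.Nonempty) → 𝒞.PairwiseDisjoint id → #𝒞 ≤ κ}

/-- The set of infinite cardinals κ witnessing the nonquasiregularity degree:
every nonempty open set U contains a nonempty set ⋂₀ 𝒱 with 𝒱 an open family of
size at most κ and ⋂_{V ∈ 𝒱} cl V ⊆ U. -/
def nqSet (X : Type u) [TopologicalSpace X] : Set Cardinal.{u} :=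
  {κ : Cardinal.{u} | ℵ₀ ≤ κ ∧ ∀ U : Set X, IsOpen U → U.Nonempty →
    ∃ 𝒱 : Set (Set X), (∀ V ∈ 𝒱, IsOpen V) ∧ #𝒱 ≤ κ ∧
      (⋂₀ 𝒱).Nonempty ∧ (⋂ V ∈ 𝒱, closure V) ⊆ U}

/-- A space is an nq-space if its nonquasiregularity degree is defined. -/
def IsNqSpace (X : Type u) [TopologicalSpace X] : Prop :=
  (nqSet X).Nonempty

/-- The nonquasiregularity degree of a space. -/
noncomputable def nq (X : Type u) [TopologicalSpace X] : Cardinal.{u} :=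
  sInf (nqSet X)

/-- The closed pseudocharacter at a point. -/
noncomputable def psiCPoint (X : Type u) [TopologicalSpace X] (x : X) : Cardinal.{u} :=
  sInf {κ : Cardinal.{u} | ℵ₀ ≤ κ ∧ ∃ 𝒱 : Set (Set X),
    (∀ V ∈ 𝒱, IsOpen V ∧ x ∈ V) ∧ #𝒱 ≤ κ ∧ (⋂ V ∈ 𝒱, closure V) = {x}}

/-- The closed pseudocharacter of a space. -/
noncomputable def psiC (X : Type u) [TopologicalSpace X] : Cardinal.{u} :=
  sInf {κ : Cardinal.{u} | ℵ₀ ≤ κ ∧ ∀ x : X, ∃ 𝒱 : Set (Set X),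
    (∀ V ∈ 𝒱, IsOpen V ∧ x ∈ V) ∧ #𝒱 ≤ κ ∧ (⋂ V ∈ 𝒱, closure V) = {x}}

/-- The dense closed pseudocharacter of a space. -/
noncomputable def dPsiC (X : Type u) [TopologicalSpace X] : Cardinal.{u} :=
  sInf {κ : Cardinal.{u} | ℵ₀ ≤ κ ∧ ∃ D : Set X, Dense D ∧ ∀ d ∈ D, psiCPoint X d ≤ κ}

/-- The weak closed pseudocharacter at a point: the least infinite cardinality of a
family 𝒱 of open sets with ⋂_{V ∈ 𝒱} cl V = {x}. -/
noncomputable def wPsiCPoint (X : Type u) [TopologicalSpace X] (x : X) : Cardinal.{u} :=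
  sInf {κ : Cardinal.{u} | ℵ₀ ≤ κ ∧ ∃ 𝒱 : Set (Set X),
    (∀ V ∈ 𝒱, IsOpen V) ∧ #𝒱 ≤ κ ∧ (⋂ V ∈ 𝒱, closure V) = {x}}

/-- The weak closed pseudocharacter of a space. -/
noncomputable def wPsiC (X : Type u) [TopologicalSpace X] : Cardinal.{u} :=
  ⨆ x : X, wPsiCPoint X x

/-- The pseudocharacter of a space: the least infinite cardinal κ such that every
point is the intersection of at most κ open sets. -/
noncomputable def psi (X : Type u) [TopologicalSpace X] : Cardinal.{u} :=
  sInf {κ : Cardinal.{u} | ℵ₀ ≤ κ ∧ ∀ x : X, ∃ 𝒱 : Set (Set X),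
    (∀ V ∈ 𝒱, IsOpen V) ∧ #𝒱 ≤ κ ∧ ⋂₀ 𝒱 = {x}}

/-- The Lindelöf degree of a space. -/
noncomputable def lindelofDegree (X : Type u) [TopologicalSpace X] : Cardinal.{u} :=
  sInf {κ : Cardinal.{u} | ℵ₀ ≤ κ ∧ ∀ 𝒰 : Set (Set X), (∀ U ∈ 𝒰, IsOpen U) →
    ⋃₀ 𝒰 = Set.univ → ∃ 𝒱 ⊆ 𝒰, #𝒱 ≤ κ ∧ ⋃₀ 𝒱 = Set.univ}

/-- The cardinality of the collection of regular open subsets of a space. -/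
noncomputable def cardRO (X : Type u) [TopologicalSpace X] : Cardinal.{u} :=
  #{R : Set X | R = interior (closure R)}

/-- A space is quasiregular if every nonempty open set contains a nonempty open
set whose closure is contained in it. -/
def Quasiregular (X : Type u) [TopologicalSpace X] : Prop :=
  ∀ U : Set X, IsOpen U → U.Nonempty →
    ∃ V : Set X, IsOpen V ∧ V.Nonempty ∧ closure V ⊆ U

section Aux
variable {X J : Type u}

theorem aux_surj {β : Type u} (T : Type u) (s : Set β) (hne : s.Nonempty) (hle : #s ≤ #T) :
    ∃ f : T → β, Set.range f = s := by
  classical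
  obtain ⟨e⟩ := Cardinal.le_def _ _ |>.1 hle
  refine ⟨fun t => if h : ∃ a : s, e a = t then (h.choose : β) else hne.choose, ?_⟩
  ext b
  constructor
  · rintro ⟨t, rfl⟩
    by_cases h : ∃ a : s, e a = t
    · simpa only [dif_pos h] using h.choose.2
    · simpa only [dif_neg h] using hne.choose_spec
  · intro hb
    refine ⟨e ⟨b, hb⟩, ?_⟩
    have h : ∃ a : s, e a = e ⟨b, hb⟩ := ⟨⟨b, hb⟩, rfl⟩
    have h2 := e.injective h.choose_spec
    simp only [dif_pos h, h2]

theorem aux_maxdisj {X : Type u} (E : Set (Set X)) :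
    ∃ 𝒞, 𝒞 ⊆ E ∧ 𝒞.PairwiseDisjoint id ∧
      ∀ t, t ⊆ E → t.PairwiseDisjoint id → 𝒞 ⊆ t → t ⊆ 𝒞 := by
  have hch : ∀ c ⊆ {t : Set (Set X) | t ⊆ E ∧ t.PairwiseDisjoint id}, IsChain (· ⊆ ·) c →
      ∃ ub ∈ {t : Set (Set X) | t ⊆ E ∧ t.PairwiseDisjoint id}, ∀ s ∈ c, s ⊆ ub := by
    intro c hc hchain
    refine ⟨⋃₀ c, ⟨?_, ?_⟩, fun s hs => subset_sUnion_of_mem hs⟩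
    · exact sUnion_subset fun t ht => (hc ht).1
    · intro a ha b hb hab
      obtain ⟨t1, ht1, hat⟩ := ha
      obtain ⟨t2, ht2, hbt⟩ := hb
      rcases hchain.total ht1 ht2 with h | h
      · exact (hc ht2).2 (h hat) hbt hab
      · exact (hc ht1).2 hat (h hbt) hab
  obtain ⟨m, hm⟩ := zorn_subset _ hch
  exact ⟨m, hm.prop.1, hm.prop.2, fun t ht hd hsub => hm.2 ⟨ht, hd⟩ hsub⟩


noncomputable def auxPool (B : X → Set (Set X)) (A : Set X) : Set (Set X) :=
  insert ∅ (⋃ x ∈ A, B x)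

open Classical in
noncomputable def auxPt (x₀ : X) (R : (J → Set X) → Set X) (F : J → Set X) : X :=
  if h : (R F).Nonempty then h.some else x₀

noncomputable def auxStep (x₀ : X) (B : X → Set (Set X)) (R : (J → Set X) → Set X)
    (A : Set X) : Set X :=
  insert x₀ (A ∪ Set.range fun F : J → ↥(auxPool B A) => auxPt x₀ R fun p => (F p : Set X))

theorem auxStep_supset (x₀ : X) (B : X → Set (Set X)) (R : (J → Set X) → Set X) (A : Set X) :
    A ⊆ auxStep x₀ B R A := fun _ ha => Or.inr (Or.inl ha)

noncomputable def auxD (x₀ : X) (B : X → Set (Set X)) (R : (J → Set X) → Set X)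
    (o : Ordinal.{u}) : o.ToType → Set X :=
  (wellFounded_lt).fix fun i rec => auxStep x₀ B R (⋃ j : {j // j < i}, rec j j.2)

theorem auxD_eq (x₀ : X) (B : X → Set (Set X)) (R : (J → Set X) → Set X) (o : Ordinal.{u})
    (i : o.ToType) :
    auxD x₀ B R o i = auxStep x₀ B R (⋃ j : {j : o.ToType // j < i}, auxD x₀ B R o j) := by
  rw [auxD, WellFounded.fix_eq]

theorem aux_bound {o : Ordinal.{u}} (S : Set o.ToType) (h : #S < o.cof) :
    ∃ b : o.ToType, ∀ x ∈ S, x < b := by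
  have h2 : #S < Order.cof o.ToType := by
    rwa [Ordinal.cof_toType]
  by_contra hc
  push_neg at hc
  exact (Order.cof_le (s := S) (fun a => by
    obtain ⟨x, hx, h⟩ := hc a
    exact ⟨x, hx, h⟩)).not_gt h2

/-- Core closure construction. -/
theorem aux_core (x₀ : X) (J : Type u) (B : X → Set (Set X))
    (R : (J → Set X) → Set X) {π : Cardinal.{u}}
    (hκ : ℵ₀ ≤ #J) (hπ : ℵ₀ ≤ π) (hBcard : ∀ x, #(B x) ≤ π) :
    ∃ D : Set X, x₀ ∈ D ∧ #D ≤ π ^ #J ∧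
      ∀ F : J → Set X, (∀ p, F p ∈ insert ∅ (⋃ x ∈ D, B x)) → (R F).Nonempty →
        ∃ q ∈ D, q ∈ R F := by
  classical
  set κ := #J with hκdef
  set L := π ^ κ with hLdef
  have h2 : (2 : Cardinal) ≤ π :=
    le_trans (le_of_lt (by exact_mod_cast Cardinal.nat_lt_aleph0 2)) hπ
  have hπ0 : π ≠ 0 := ((aleph0_pos).trans_le hπ).ne'
  have hπL : π ≤ L := by
    conv_lhs => rw [← power_one π]
    exact power_le_power_left hπ0 (Cardinal.one_le_aleph0.trans hκ)
  have hℵL : ℵ₀ ≤ L := hπ.trans hπL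
  have hLL : L * L = L := mul_eq_self hℵL
  have hLκ : L ^ κ = L := by rw [hLdef, ← power_mul, mul_eq_self hκ]
  have hcantor : κ < L := (Cardinal.cantor κ).trans_le (power_le_power_right h2)
  set ν := Order.succ κ with hνdef
  have hνL : ν ≤ L := Order.succ_le_of_lt hcantor
  have hℵν : ℵ₀ ≤ ν := hκ.trans (Order.le_succ κ)
  have hν0 : ν ≠ 0 := ((aleph0_pos).trans_le hℵν).ne'
  set o := ν.ord with hodef
  haveI hne : Nonempty o.ToType := by
    rw [Ordinal.nonempty_toType_iff]
    intro h0
    exact hν0 (by rw [← Cardinal.card_ord ν, ← hodef, h0, Ordinal.card_zero])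
  have hι : #o.ToType = ν := by rw [Cardinal.mk_toType, hodef, Cardinal.card_ord]
  set D : o.ToType → Set X := auxD x₀ B R o with hDdef
  have hDsub : ∀ i : o.ToType, (⋃ j : {j : o.ToType // j < i}, D j) ⊆ D i := by
    intro i
    rw [hDdef, auxD_eq]
    exact auxStep_supset _ _ _ _
  have hmono : ∀ {j i : o.ToType}, j < i → D j ⊆ D i := by
    intro j i hj
    exact le_trans (subset_iUnion (fun j : {j : o.ToType // j < i} => D j.1) ⟨j, hj⟩) (hDsub i)
  have hx₀ : ∀ i, x₀ ∈ D i := by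
    intro i
    rw [hDdef, auxD_eq]
    exact mem_insert _ _
  -- cardinality of pools and steps
  have hPool : ∀ A : Set X, #A ≤ L → #(auxPool B A) ≤ L := by
    intro A hA
    have h1 : #(⋃ x ∈ A, B x) ≤ L := by
      rw [Set.biUnion_eq_iUnion]
      refine le_trans (mk_iUnion_le _) ?_
      calc #A * ⨆ x : A, #(B x.1) ≤ L * π := mul_le_mul' hA (ciSup_le' fun x => hBcard x.1)
        _ ≤ L * L := mul_le_mul' le_rfl hπL
        _ = L := hLL
    refine le_trans (mk_insert_le) ?_
    calc #(⋃ x ∈ A, B x) + 1 ≤ L + L := add_le_add h1 (le_trans one_le_aleph0 hℵL)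
      _ = L := add_eq_self hℵL
  have hStep : ∀ A : Set X, #A ≤ L → #(auxStep x₀ B R A) ≤ L := by
    intro A hA
    have hrange : #(Set.range fun F : J → ↥(auxPool B A) => auxPt x₀ R fun p => (F p : Set X)) ≤ L := by
      refine le_trans mk_range_le ?_
      rw [← Cardinal.power_def]
      calc #(auxPool B A) ^ κ ≤ L ^ κ := power_le_power_right (hPool A hA)
        _ = L := hLκ
    refine le_trans mk_insert_le (le_trans (add_le_add (le_trans (mk_union_le _ _)
      (le_trans (add_le_add hA hrange) (le_of_eq (add_eq_self hℵL)))) le_rfl) ?_)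
    calc L + 1 ≤ L + L := add_le_add le_rfl (le_trans one_le_aleph0 hℵL)
      _ = L := add_eq_self hℵL
  have hDcard : ∀ i, #(D i) ≤ L := by
    intro i
    induction i using (wellFounded_lt (α := o.ToType)).induction with
    | _ i IH =>
      rw [hDdef, auxD_eq]
      refine hStep _ ?_
      refine le_trans (mk_iUnion_le _) ?_
      have h1 : #{j : o.ToType // j < i} ≤ ν := le_trans (mk_subtype_le _) (le_of_eq hι)
      have h2' : ⨆ j : {j : o.ToType // j < i}, #(auxD x₀ B R o j.1) ≤ L :=
        ciSup_le' fun j => IH j.1 j.2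
      calc _ ≤ ν * L := mul_le_mul' h1 h2'
        _ ≤ L * L := mul_le_mul' hνL le_rfl
        _ = L := hLL
  refine ⟨⋃ i, D i, mem_iUnion.2 ⟨Classical.arbitrary _, hx₀ _⟩, ?_, ?_⟩
  · refine le_trans (mk_iUnion_le _) ?_
    calc #o.ToType * ⨆ i, #(D i) ≤ ν * L := mul_le_mul' (le_of_eq hι) (ciSup_le' hDcard)
      _ ≤ L * L := mul_le_mul' hνL le_rfl
      _ = L := hLL
  · intro F hF hR
    -- find stages
    have hstage : ∀ p : J, ∃ i : o.ToType, F p = ∅ ∨ ∃ x, x ∈ D i ∧ F p ∈ B x := by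
      intro p
      rcases hF p with h | h
      · exact ⟨Classical.arbitrary _, Or.inl h⟩
      · obtain ⟨x, hx, hFx⟩ := mem_iUnion₂.1 h
        obtain ⟨i, hi⟩ := mem_iUnion.1 hx
        exact ⟨i, Or.inr ⟨x, hi, hFx⟩⟩
    choose g hg using hstage
    -- bound the stages
    have hbdd : ∃ b : o.ToType, ∀ p : J, g p < b := by
      have hcof : #(Set.range g) < o.cof := by
        have hcof2 : o.cof = ν := (Cardinal.isRegular_succ hκ).cof_eq
        rw [hcof2]
        exact lt_of_le_of_lt mk_range_le (Order.lt_succ κ)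
      obtain ⟨b, hb⟩ := aux_bound _ hcof
      exact ⟨b, fun p => hb (g p) (mem_range_self p)⟩
    obtain ⟨b, hb⟩ := hbdd
    have hF' : ∀ p, F p ∈ auxPool B (⋃ j : {j : o.ToType // j < b}, D j) := by
      intro p
      rcases hg p with h | ⟨x, hx, hFx⟩
      · exact Or.inl h
      · exact Or.inr (mem_iUnion₂.2 ⟨x, mem_iUnion.2 ⟨⟨g p, hb p⟩, hx⟩, hFx⟩)
    have hpt : auxPt x₀ R F ∈ D b := by
      rw [hDdef, auxD_eq]
      refine Or.inr (Or.inr ?_)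
      exact ⟨fun p => ⟨F p, hF' p⟩, rfl⟩
    refine ⟨auxPt x₀ R F, mem_iUnion.2 ⟨b, hpt⟩, ?_⟩
    rw [auxPt, dif_pos hR]
    exact hR.some_mem

end Aux
/-- If `X` is Hausdorff then `d(X) ≤ πχ(X)^(c(X)·nq(X))`. -/
theorem stmt_3 (X : Type u) [TopologicalSpace X] [T2Space X] :
    dens X ≤ piChar X ^ (cellularity X * nq X) := by
  classical
  rcases isEmpty_or_nonempty X with hX | hX
  · have hd : Dense (∅ : Set X) := fun x => (IsEmpty.false x).elim
    refine le_trans (csInf_le (OrderBot.bddBelow _) ⟨∅, hd, rfl⟩) ?_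
    rw [Cardinal.mk_emptyCollection]
    exact zero_le
  obtain ⟨x₀⟩ := hX
  set Ω : Cardinal.{u} := max ℵ₀ (2 ^ #X) with hΩdef
  have hΩ : ℵ₀ ≤ Ω := le_max_left _ _
  have hsets : ∀ 𝒜 : Set (Set X), #𝒜 ≤ Ω := fun 𝒜 =>
    le_trans (Cardinal.mk_set_le _) (le_trans (le_of_eq Cardinal.mk_set) (le_max_right _ _))
  -- cellularity facts
  have hcell : cellularity X ∈ {κ : Cardinal.{u} | ℵ₀ ≤ κ ∧ ∀ 𝒞 : Set (Set X),
      (∀ U ∈ 𝒞, IsOpen U ∧ U.Nonempty) → 𝒞.PairwiseDisjoint id → #𝒞 ≤ κ} :=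
    csInf_mem ⟨Ω, hΩ, fun 𝒞 _ _ => hsets 𝒞⟩
  obtain ⟨hℵc, hcellb⟩ := hcell
  -- nq facts
  have hnqwit : Ω ∈ nqSet X := by
    refine ⟨hΩ, fun U hU hUne => ?_⟩
    obtain ⟨x, hx⟩ := hUne
    refine ⟨{V : Set X | IsOpen V ∧ x ∈ V}, fun V hV => hV.1, hsets _,
      ⟨x, fun V hV => hV.2⟩, ?_⟩
    intro y hy
    have hyx : y = x := by
      by_contra hne
      obtain ⟨uu, vv, hu, hv, hyu, hxv, huv⟩ := t2_separation hne
      have h1 : y ∈ closure vv := mem_iInter₂.1 hy vv ⟨hv, hxv⟩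
      obtain ⟨z, hz⟩ := mem_closure_iff.1 h1 uu hu hyu
      have : z ∈ uu ∩ vv := hz
      rw [huv.inter_eq] at this
      exact this
    rw [hyx]; exact hx
  have hnq : nq X ∈ nqSet X := csInf_mem ⟨Ω, hnqwit⟩
  obtain ⟨hℵn, hnqb⟩ := hnq
  -- π-character facts
  have hpich : ∀ x : X, piCharPoint X x ∈ {κ : Cardinal.{u} | ℵ₀ ≤ κ ∧
      ∃ 𝒱 : Set (Set X), IsLocalPiBase X x 𝒱 ∧ #𝒱 ≤ κ} := by
    intro x
    refine csInf_mem ⟨Ω, hΩ, {V : Set X | IsOpen V ∧ V.Nonempty},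
      ⟨fun V hV => hV, fun U hU hxU => ⟨U, ⟨hU, ⟨x, hxU⟩⟩, subset_rfl⟩⟩, hsets _⟩
  have hpiLe : ∀ x : X, piCharPoint X x ≤ piChar X := fun x =>
    le_ciSup (Cardinal.bddAbove_range _) x
  have hℵπ : ℵ₀ ≤ piChar X := le_trans (hpich x₀).1 (hpiLe x₀)
  have hBex : ∀ x : X, ∃ 𝒱 : Set (Set X), IsLocalPiBase X x 𝒱 ∧ #𝒱 ≤ piChar X := by
    intro x
    obtain ⟨h1, 𝒱, h2, h3⟩ := hpich x
    exact ⟨𝒱, h2, le_trans h3 (hpiLe x)⟩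
  choose B hBbase hBcard using hBex
  -- index type
  have hJcard : #((cellularity X).out × (nq X).out) = cellularity X * nq X := by
    rw [Cardinal.mk_prod, Cardinal.mk_out, Cardinal.mk_out, Cardinal.lift_id,
      Cardinal.lift_id]
  have hℵκ : ℵ₀ ≤ #((cellularity X).out × (nq X).out) := by
    rw [hJcard]
    exact le_trans hℵc (le_mul_of_one_le_right zero_le (le_trans one_le_aleph0 hℵn))
  obtain ⟨D, hx₀D, hDcard, hDcl⟩ := aux_core x₀ ((cellularity X).out × (nq X).out) B
    (fun F => (⋃ i : (nq X).out, closure (⋃ j : (cellularity X).out, F (j, i)))ᶜ)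
    hℵκ hℵπ hBcard
  -- density
  have hdense : Dense D := by
    rw [dense_iff_inter_open]
    intro U hU hUne
    by_contra hem
    have hDU : ∀ q ∈ D, q ∉ U := fun q hq hqU => hem ⟨q, hqU, hq⟩
    obtain ⟨𝒲, h𝒲open, h𝒲card, h𝒲S, h𝒲sub⟩ := hnqb U hU hUne
    rcases eq_empty_or_nonempty 𝒲 with h𝒲e | h𝒲ne
    · refine hDU x₀ hx₀D (h𝒲sub ?_)
      simp [h𝒲e]
    obtain ⟨s, hs⟩ := h𝒲S
    have hsW : ∀ W ∈ 𝒲, s ∈ W := fun W hW => hs W hW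
    -- the pool of π-base elements of points of D
    have hPopen : ∀ Bs ∈ ⋃ x ∈ D, B x, IsOpen Bs ∧ Bs.Nonempty := by
      intro Bs hBs
      obtain ⟨x, _, hBx⟩ := mem_iUnion₂.1 hBs
      exact (hBbase x).1 Bs hBx
    -- maximal pairwise-disjoint families
    have hmaxex : ∀ W : Set X, ∃ 𝒞,
        𝒞 ⊆ {Bs | (Bs ∈ ⋃ x ∈ D, B x) ∧ Bs ∩ closure W = ∅} ∧ 𝒞.PairwiseDisjoint id ∧
        ∀ t, t ⊆ {Bs | (Bs ∈ ⋃ x ∈ D, B x) ∧ Bs ∩ closure W = ∅} →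
          t.PairwiseDisjoint id → 𝒞 ⊆ t → t ⊆ 𝒞 := fun W => aux_maxdisj _
    choose 𝒞 h𝒞sub h𝒞dis h𝒞max using hmaxex
    have h𝒞card : ∀ W : Set X, #(𝒞 W) ≤ cellularity X := by
      intro W
      exact hcellb (𝒞 W) (fun Bs hBs => hPopen Bs (h𝒞sub W hBs).1) (h𝒞dis W)
    -- surjection from the index types
    obtain ⟨w, hwrange⟩ := aux_surj (nq X).out 𝒲 h𝒲ne
      (le_trans h𝒲card (le_of_eq (Cardinal.mk_out (nq X)).symm))
    have hwmem : ∀ i, w i ∈ 𝒲 := fun i => hwrange ▸ mem_range_self i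
    have hσex : ∀ i : (nq X).out, ∃ σ : (cellularity X).out → Set X,
        range σ = insert ∅ (𝒞 (w i)) := by
      intro i
      refine aux_surj _ _ ⟨∅, mem_insert _ _⟩ ?_
      refine le_trans mk_insert_le ?_
      calc #(𝒞 (w i)) + 1 ≤ cellularity X + cellularity X :=
            add_le_add (h𝒞card _) (le_trans one_le_aleph0 hℵc)
        _ = cellularity X := add_eq_self hℵc
        _ = #(cellularity X).out := (Cardinal.mk_out _).symm
    choose σ hσ using hσex
    have hFkey : ∀ i : (nq X).out,
        (⋃ j : (cellularity X).out, (fun p : (cellularity X).out × (nq X).out =>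
          σ p.2 p.1) (j, i)) = ⋃₀ 𝒞 (w i) := by
      intro i
      rw [show (⋃ j : (cellularity X).out, σ i j) = ⋃₀ (range (σ i)) from
        (sUnion_range _).symm, hσ i, sUnion_insert, empty_union]
    have hFmem : ∀ p : (cellularity X).out × (nq X).out,
        σ p.2 p.1 ∈ insert ∅ (⋃ x ∈ D, B x) := by
      intro p
      have h := mem_range_self (f := σ p.2) p.1
      rw [hσ p.2] at h
      rcases h with h | h
      · exact Or.inl h
      · exact Or.inr (h𝒞sub (w p.2) h).1
    have hsR : s ∈ (⋃ i : (nq X).out, closure (⋃ j : (cellularity X).out,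
        (fun p : (cellularity X).out × (nq X).out => σ p.2 p.1) (j, i)))ᶜ := by
      intro hsc
      obtain ⟨i, hsc⟩ := mem_iUnion.1 hsc
      rw [hFkey i] at hsc
      obtain ⟨z, hzw, hzc⟩ := mem_closure_iff.1 hsc (w i) (h𝒲open _ (hwmem i))
        (hsW _ (hwmem i))
      obtain ⟨Bz, hBz, hzB⟩ := hzc
      have hzero : z ∈ Bz ∩ closure (w i) := ⟨hzB, subset_closure hzw⟩
      rw [(h𝒞sub (w i) hBz).2] at hzero
      exact hzero
    obtain ⟨q, hqD, hqR⟩ := hDcl _ hFmem ⟨s, hsR⟩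
    have hqW : ∃ W ∈ 𝒲, q ∉ closure W := by
      by_contra h
      push_neg at h
      exact hDU q hqD (h𝒲sub (mem_iInter₂.2 h))
    obtain ⟨W, hW𝒲, hqclW⟩ := hqW
    obtain ⟨i, hiW⟩ : ∃ i, w i = W := by
      have : W ∈ range w := by rw [hwrange]; exact hW𝒲
      exact this
    have hq𝒞 : q ∉ closure (⋃₀ 𝒞 W) := by
      intro hc
      refine hqR (mem_iUnion.2 ⟨i, ?_⟩)
      rw [hFkey i, hiW]
      exact hc
    have hGopen : IsOpen (closure W ∪ closure (⋃₀ 𝒞 W))ᶜ :=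
      (isClosed_closure.union isClosed_closure).isOpen_compl
    have hqG : q ∈ (closure W ∪ closure (⋃₀ 𝒞 W))ᶜ := fun h => h.elim hqclW hq𝒞
    obtain ⟨B', hB'B, hB'G⟩ := (hBbase q).2 _ hGopen hqG
    obtain ⟨hB'open, hB'ne⟩ := (hBbase q).1 B' hB'B
    have hB'E : B' ∈ {Bs | (Bs ∈ ⋃ x ∈ D, B x) ∧ Bs ∩ closure W = ∅} := by
      refine ⟨mem_iUnion₂.2 ⟨q, hqD, hB'B⟩, ?_⟩
      ext z
      simp only [mem_inter_iff, mem_empty_iff_false, iff_false, not_and]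
      intro hz1 hz2
      exact hB'G hz1 (Or.inl hz2)
    have hB'dis : ∀ Bc ∈ 𝒞 W, Disjoint B' Bc := by
      intro Bc hBc
      rw [Set.disjoint_left]
      intro z hzB' hzBc
      exact hB'G hzB' (Or.inr (subset_closure ⟨Bc, hBc, hzBc⟩))
    have hB'not : B' ∉ 𝒞 W := by
      intro h
      obtain ⟨z, hz⟩ := hB'ne
      have := Set.disjoint_left.1 (hB'dis B' h) hz
      exact this hz
    have hins : insert B' (𝒞 W) ⊆ 𝒞 W := by
      refine h𝒞max W _ (insert_subset_iff.2 ⟨hB'E, h𝒞sub W⟩) ?_ (subset_insert _ _)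
      exact (h𝒞dis W).insert fun Bc hBc _ => hB'dis Bc hBc
    exact hB'not (hins (mem_insert _ _))
  refine le_trans (csInf_le (OrderBot.bddBelow _) ⟨D, hdense, rfl⟩) ?_
  rw [hJcard] at hDcard
  exact hDcard
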